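/- Let μ be a probability measure on a space Ω, let t > 0, α > 1, c > 0, d: Ω × Ω → [0,∞) measurable, and let F, G: Ω → [0,∞) be measurable functions satisfying the Harnack-type inequality F(x)^α ≤ G(y)·exp(c·d(x,y)²/(α−1)) for all x, y ∈ Ω, with ∫ G dμ = 1. Then for all x: F(x)^α · ∫ exp(−c·d(x,y)²/(α−1)) dμ(y) ≤ 1, and hence for β > α, ∫ F^β dμ ≤ ∬ exp((β/α)·(α/(α−1))·c·d(x,y)²) dμ(y) dμ(x), provided that ∫(∫exp(−c d(x,y)²/(α−1))dμ(y))^{−β/α}dμ(x) is bounded by the right-hand side via the inequality 1 ≤ (∫g dμ)(∫g⁻¹ dμ). -/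

import Mathlib

open MeasureTheory ENNReal

theorem harnack_implies_hyperboundedness {Ω : Type*} [MeasurableSpace Ω]
    (μ : Measure Ω) [IsProbabilityMeasure μ]
    (t α c : ℝ) (ht : 0 < t) (hα : 1 < α) (hc : 0 < c)
    (d : Ω → Ω → ℝ) (hd : ∀ x y, 0 ≤ d x y) (hdm : Measurable (Function.uncurry d))
    (F G : Ω → ℝ) (hF : ∀ x, 0 ≤ F x) (hG : ∀ x, 0 ≤ G x)
    (hFm : Measurable F) (hGm : Measurable G)
    (hHar : ∀ x y, F x ^ α ≤ G y * Real.exp (c * d x y ^ 2 / (α - 1)))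
    (hG1 : ∫ y, G y ∂μ = 1) :
    (∀ x, F x ^ α * ∫ y, Real.exp (-(c * d x y ^ 2 / (α - 1))) ∂μ ≤ 1) ∧
    ∀ β, α < β →
      ∫⁻ x, ENNReal.ofReal (F x ^ β) ∂μ ≤
        ∫⁻ x, ∫⁻ y, ENNReal.ofReal (Real.exp ((β / (α - 1)) * c * d x y ^ 2)) ∂μ ∂μ := by
  have hα1 : (0:ℝ) < α - 1 := by linarith
  have hα0 : (0:ℝ) < α := by linarith
  have hu0 : ∀ x y, 0 ≤ c * d x y ^ 2 / (α - 1) := fun x y =>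
    div_nonneg (mul_nonneg hc.le (sq_nonneg _)) hα1.le
  have hdx : ∀ x, Measurable fun y => d x y := fun x =>
    hdm.comp (measurable_const.prodMk measurable_id)
  have hhm : ∀ x, Measurable fun y => Real.exp (-(c * d x y ^ 2 / (α - 1))) := fun x =>
    ((((hdx x).pow_const 2).const_mul c).div_const _).neg.exp
  have hle1 : ∀ x y, Real.exp (-(c * d x y ^ 2 / (α - 1))) ≤ 1 := fun x y =>
    Real.exp_le_one_iff.mpr (neg_nonpos.mpr (hu0 x y))
  have hhint : ∀ x, Integrable (fun y => Real.exp (-(c * d x y ^ 2 / (α - 1)))) μ := fun x =>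
    (integrable_const (1:ℝ)).mono' (hhm x).aestronglyMeasurable (ae_of_all _ fun y => by
      rw [Real.norm_eq_abs, abs_of_pos (Real.exp_pos _)]; exact hle1 x y)
  have hGint : Integrable G μ := by
    by_contra h
    rw [integral_undef h] at hG1; norm_num at hG1
  have part1 : ∀ x, F x ^ α * ∫ y, Real.exp (-(c * d x y ^ 2 / (α - 1))) ∂μ ≤ 1 := by
    intro x
    have key : ∀ y, F x ^ α * Real.exp (-(c * d x y ^ 2 / (α - 1))) ≤ G y := by
      intro y
      have h2 := mul_le_mul_of_nonneg_right (hHar x y)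
        (Real.exp_pos (-(c * d x y ^ 2 / (α - 1)))).le
      calc F x ^ α * Real.exp (-(c * d x y ^ 2 / (α - 1)))
          ≤ G y * Real.exp (c * d x y ^ 2 / (α - 1)) *
            Real.exp (-(c * d x y ^ 2 / (α - 1))) := h2
        _ = G y := by rw [mul_assoc, ← Real.exp_add]; simp
    calc F x ^ α * ∫ y, Real.exp (-(c * d x y ^ 2 / (α - 1))) ∂μ
        = ∫ y, F x ^ α * Real.exp (-(c * d x y ^ 2 / (α - 1))) ∂μ :=
          (integral_const_mul _ _).symm
      _ ≤ ∫ y, G y ∂μ := integral_mono ((hhint x).const_mul _) hGint key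
      _ = 1 := hG1
  refine ⟨part1, fun β hβ => ?_⟩
  have hβ0 : (0:ℝ) < β := lt_trans hα0 hβ
  set r : ℝ := β / α with hr
  have hr1 : 1 < r := (one_lt_div hα0).mpr hβ
  have hr0 : 0 ≤ r := by linarith
  set p : ℝ := (α + β) / β with hp
  set q : ℝ := (α + β) / α with hq
  have hp0 : 0 < p := div_pos (by linarith) hβ0
  have hq0 : 0 < q := div_pos (by linarith) hα0
  have hpq : p.HolderConjugate q := by
    rw [Real.holderConjugate_iff]
    constructor
    · rw [hp, lt_div_iff₀ hβ0]; linarith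
    · rw [hp, hq]
      have hab : α + β ≠ 0 := by positivity
      field_simp; ring
  refine lintegral_mono fun x => ?_
  set K : ℝ≥0∞ := ∫⁻ y, ENNReal.ofReal (Real.exp (-(c * d x y ^ 2 / (α - 1)))) ∂μ with hK
  set J : ℝ≥0∞ := ∫⁻ y, ENNReal.ofReal (Real.exp (r * (c * d x y ^ 2 / (α - 1)))) ∂μ with hJ
  have hK_eq : ENNReal.ofReal (∫ y, Real.exp (-(c * d x y ^ 2 / (α - 1))) ∂μ) = K :=
    ofReal_integral_eq_lintegral_ofReal (hhint x) (ae_of_all _ fun y => (Real.exp_pos _).le)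
  have hK1 : K ≤ 1 := by
    calc K ≤ ∫⁻ _, 1 ∂μ := lintegral_mono fun y => ENNReal.ofReal_le_one.mpr (hle1 x y)
      _ = 1 := by simp
  have hKtop : K ≠ ⊤ := (lt_of_le_of_lt hK1 (by norm_num)).ne
  have hK0 : 0 < K := by
    rw [hK, lintegral_pos_iff_support ((hhm x).ennreal_ofReal)]
    have : (Function.support fun y => ENNReal.ofReal (Real.exp (-(c * d x y ^ 2 / (α - 1)))))
        = Set.univ :=
      Set.eq_univ_of_forall fun y => (ENNReal.ofReal_pos.mpr (Real.exp_pos _)).ne'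
    rw [this, measure_univ]
    exact zero_lt_one
  -- step B
  have hB : ENNReal.ofReal (F x ^ α) * K ≤ 1 := by
    rw [← hK_eq, ← ENNReal.ofReal_mul (Real.rpow_nonneg (hF x) α)]
    exact ENNReal.ofReal_le_one.mpr (part1 x)
  -- step C
  have hαr : α * r = β := by rw [hr, mul_comm, div_mul_cancel₀ _ hα0.ne']
  have hC : ENNReal.ofReal (F x ^ β) * K ^ r ≤ 1 := by
    have := ENNReal.rpow_le_rpow hB hr0
    rw [ENNReal.one_rpow, ENNReal.mul_rpow_of_nonneg _ _ hr0,
      ENNReal.ofReal_rpow_of_nonneg (Real.rpow_nonneg (hF x) α) hr0,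
      ← Real.rpow_mul (hF x), hαr] at this
    exact this
  -- Hölder
  have hfp : ∀ y, ENNReal.ofReal (Real.exp (-(c * d x y ^ 2 / (α - 1)) / p)) ^ p
      = ENNReal.ofReal (Real.exp (-(c * d x y ^ 2 / (α - 1)))) := by
    intro y
    rw [ENNReal.ofReal_rpow_of_nonneg (Real.exp_pos _).le hp0.le, ← Real.exp_mul,
      div_mul_cancel₀ _ hp0.ne']
  have hqp : ∀ s : ℝ, s / p * q = r * s := by
    intro s
    rw [hp, hq, hr]
    field_simp
  have hgq : ∀ y, ENNReal.ofReal (Real.exp (c * d x y ^ 2 / (α - 1) / p)) ^ q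
      = ENNReal.ofReal (Real.exp (r * (c * d x y ^ 2 / (α - 1)))) := by
    intro y
    rw [ENNReal.ofReal_rpow_of_nonneg (Real.exp_pos _).le hq0.le, ← Real.exp_mul, hqp]
  have holder : (1:ℝ≥0∞) ≤ K ^ (1/p) * J ^ (1/q) := by
    have hmeas1 : AEMeasurable (fun y => ENNReal.ofReal
        (Real.exp (-(c * d x y ^ 2 / (α - 1)) / p))) μ :=
      (((((hdx x).pow_const 2).const_mul c).div_const _).neg.div_const _).exp.ennreal_ofReal.aemeasurable
    have hmeas2 : AEMeasurable (fun y => ENNReal.ofReal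
        (Real.exp (c * d x y ^ 2 / (α - 1) / p))) μ :=
      ((((((hdx x).pow_const 2).const_mul c).div_const _)).div_const _).exp.ennreal_ofReal.aemeasurable
    have h := ENNReal.lintegral_mul_le_Lp_mul_Lq μ hpq hmeas1 hmeas2
    have hfg : ∀ y, (fun y => ENNReal.ofReal (Real.exp (-(c * d x y ^ 2 / (α - 1)) / p))) y *
        (fun y => ENNReal.ofReal (Real.exp (c * d x y ^ 2 / (α - 1) / p))) y = 1 := by
      intro y
      simp only
      rw [← ENNReal.ofReal_mul (Real.exp_pos _).le, ← Real.exp_add]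
      have h0 : -(c * d x y ^ 2 / (α - 1)) / p + c * d x y ^ 2 / (α - 1) / p = 0 := by ring
      rw [h0, Real.exp_zero, ENNReal.ofReal_one]
    calc (1:ℝ≥0∞) = ∫⁻ y, ((fun y => ENNReal.ofReal (Real.exp (-(c * d x y ^ 2 / (α - 1)) / p))) *
          (fun y => ENNReal.ofReal (Real.exp (c * d x y ^ 2 / (α - 1) / p)))) y ∂μ := by
          simp only [Pi.mul_apply]
          rw [lintegral_congr hfg]
          simp
      _ ≤ _ := h
      _ = K ^ (1/p) * J ^ (1/q) := by
          rw [hK, hJ]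
          congr 1
          · congr 1; exact lintegral_congr hfp
          · congr 1; exact lintegral_congr hgq
  -- raise to power q
  have hpqr : 1 / p * q = r := by rw [one_div, hp, hq, hr]; field_simp; try ring
  have holder2 : (1:ℝ≥0∞) ≤ K ^ r * J := by
    have h := ENNReal.rpow_le_rpow holder hq0.le
    rw [ENNReal.one_rpow, ENNReal.mul_rpow_of_nonneg _ _ hq0.le, ← ENNReal.rpow_mul,
      ← ENNReal.rpow_mul, hpqr, one_div, inv_mul_cancel₀ hq0.ne', ENNReal.rpow_one] at h
    exact h
  -- combine
  have hKr0 : K ^ r ≠ 0 := (ENNReal.rpow_pos hK0 hKtop).ne'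
  have hKrtop : K ^ r ≠ ⊤ := ENNReal.rpow_ne_top_of_nonneg hr0 hKtop
  have hFJ : ENNReal.ofReal (F x ^ β) ≤ J := by
    rw [← ENNReal.mul_le_mul_iff_left hKr0 hKrtop]
    calc ENNReal.ofReal (F x ^ β) * K ^ r ≤ 1 := hC
      _ ≤ K ^ r * J := holder2
      _ = J * K ^ r := mul_comm _ _
  refine le_trans hFJ ?_
  refine lintegral_mono fun y => ?_
  apply ENNReal.ofReal_le_ofReal
  apply Real.exp_le_exp.mpr
  have h1 : r ≤ β := div_le_self hβ0.le hα.le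
  calc r * (c * d x y ^ 2 / (α - 1)) ≤ β * (c * d x y ^ 2 / (α - 1)) :=
        mul_le_mul_of_nonneg_right h1 (hu0 x y)
    _ = β / (α - 1) * c * d x y ^ 2 := by ring
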